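/- Control of the nonlinear error term: there exists a constant C₁₈ > 0, independent of h, m, n and of the grid functions, such that for all periodic grid functions Φ^{k+1}, Φ^k, φ^{k+1}, φ^k, setting φ̃^{k+1} := Φ^{k+1} − φ^{k+1} and φ̃^k := Φ^k − φ^k, one has ‖Δ_h(χ(Φ^{k+1},Φ^k) − χ(φ^{k+1},φ^k))‖₂ ≤ C₁₈·{ K₁²·(‖Δ_hφ̃^{k+1}‖₂ + ‖Δ_hφ̃^k‖₂) + K₁K₄·(‖∇_hφ̃^{k+1}‖₄ + ‖∇_hφ̃^k‖₄) + (K₁K₃ + K₄²)·(‖φ̃^{k+1}‖_∞ + ‖φ̃^k‖_∞) + (K₅² + K₁K₂)·(‖φ̃^{k+1}‖₂ + ‖φ̃^k‖₂) }, where K₁ = ‖Φ^{k+1}‖_∞ + ‖Φ^k‖_∞ + ‖φ^{k+1}‖_∞ + ‖φ^k‖_∞, K₂ = ‖Δ_h^xΦ^{k+1}‖_∞ + ‖Δ_h^xΦ^k‖_∞ + ‖Δ_h^yΦ^{k+1}‖_∞ + ‖Δ_h^yΦ^k‖_∞, K₃ = ‖Δ_h^xφ^{k+1}‖₂ + ‖Δ_h^xφ^k‖₂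 + ‖Δ_h^yφ^{k+1}‖₂ + ‖Δ_h^yφ^k‖₂, K₄ = ‖∇_hΦ^{k+1}‖₄ + ‖∇_hΦ^k‖₄ + ‖∇_hφ^{k+1}‖₄ + ‖∇_hφ^k‖₄, and K₅ = ‖∇_hΦ^{k+1}‖_∞ + ‖∇_hΦ^k‖_∞. -/

import Mathlib

open Finset

noncomputable section

/-- Periodic grid functions on an `m × n` grid (indices taken modulo `m` and `n`). -/
abbrev Grid (m n : ℕ) := ZMod m × ZMod n → ℝ

/-- Forward difference in the `x` direction. -/
def Dx {m n : ℕ} (h : ℝ) (φ : Grid m n) : Grid m n :=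
  fun p => (φ (p.1 + 1, p.2) - φ p) / h

/-- Forward difference in the `y` direction. -/
def Dy {m n : ℕ} (h : ℝ) (φ : Grid m n) : Grid m n :=
  fun p => (φ (p.1, p.2 + 1) - φ p) / h

/-- The five-point discrete Laplacian. -/
def lapH {m n : ℕ} (h : ℝ) (φ : Grid m n) : Grid m n :=
  fun p => (φ (p.1 + 1, p.2) + φ (p.1 - 1, p.2) + φ (p.1, p.2 + 1) + φ (p.1, p.2 - 1)
    - 4 * φ p) / h ^ 2

/-- One-dimensional discrete Laplacian in the `x` direction. -/
def lapHx {m n : ℕ} (h : ℝ) (φ : Grid m n) : Grid m n :=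
  fun p => (φ (p.1 + 1, p.2) - 2 * φ p + φ (p.1 - 1, p.2)) / h ^ 2

/-- One-dimensional discrete Laplacian in the `y` direction. -/
def lapHy {m n : ℕ} (h : ℝ) (φ : Grid m n) : Grid m n :=
  fun p => (φ (p.1, p.2 + 1) - 2 * φ p + φ (p.1, p.2 - 1)) / h ^ 2

/-- Discrete `L²` norm. -/
def norm2 {m n : ℕ} [NeZero m] [NeZero n] (h : ℝ) (φ : Grid m n) : ℝ :=
  Real.sqrt (h ^ 2 * ∑ p : ZMod m × ZMod n, φ p ^ 2)

/-- Discrete `L⁴` norm of the gradient. -/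
def gradNorm4 {m n : ℕ} [NeZero m] [NeZero n] (h : ℝ) (φ : Grid m n) : ℝ :=
  (h ^ 2 * ∑ p : ZMod m × ZMod n, (Dx h φ p ^ 4 + Dy h φ p ^ 4)) ^ ((1 : ℝ) / 4)

/-- Discrete `L^∞` norm. -/
def normInf {m n : ℕ} [NeZero m] [NeZero n] (φ : Grid m n) : ℝ :=
  ⨆ p : ZMod m × ZMod n, |φ p|

/-- Discrete `L^∞` norm of the gradient. -/
def gradNormInf {m n : ℕ} [NeZero m] [NeZero n] (h : ℝ) (φ : Grid m n) : ℝ :=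
  ⨆ p : ZMod m × ZMod n, max |Dx h φ p| |Dy h φ p|

/-- The nonlinear term `χ(u, v) = ((u² + v²)/2) · ((u + v)/2)`. -/
def chi (u v : ℝ) : ℝ := (u ^ 2 + v ^ 2) / 2 * ((u + v) / 2)

namespace NLErr

variable {m n : ℕ} [NeZero m] [NeZero n]

def Dp (h : ℝ) (e : ZMod m × ZMod n) (f : Grid m n) : Grid m n :=
  fun p => (f (p + e) - f p) / h

def Dm (h : ℝ) (e : ZMod m × ZMod n) (f : Grid m n) : Grid m n :=
  fun p => (f p - f (p - e)) / h

def Lp (h : ℝ) (e : ZMod m × ZMod n) (f : Grid m n) : Grid m n :=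
  fun p => (f (p + e) - 2 * f p + f (p - e)) / h ^ 2

def Q4 (h : ℝ) (f : Grid m n) : ℝ :=
  (h ^ 2 * ∑ p : ZMod m × ZMod n, f p ^ 4) ^ ((1 : ℝ) / 4)

lemma sum_shift (f : ZMod m × ZMod n → ℝ) (a : ZMod m × ZMod n) :
    ∑ p : ZMod m × ZMod n, f (p + a) = ∑ p : ZMod m × ZMod n, f p :=
  Fintype.sum_equiv (Equiv.addRight a) _ _ (fun _ => rfl)

lemma abs_le_normInf (f : Grid m n) (p : ZMod m × ZMod n) : |f p| ≤ normInf f := by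
  show |f p| ≤ ⨆ q : ZMod m × ZMod n, |f q|
  exact le_ciSup (f := fun q : ZMod m × ZMod n => |f q|) (Set.Finite.bddAbove (Set.finite_range _)) p

lemma normInf_nonneg (f : Grid m n) : 0 ≤ normInf f :=
  le_trans (abs_nonneg _) (abs_le_normInf f (0, 0))

lemma norm2_nonneg (h : ℝ) (f : Grid m n) : 0 ≤ norm2 h f := Real.sqrt_nonneg _

lemma gradNorm4_nonneg (h : ℝ) (f : Grid m n) : 0 ≤ gradNorm4 h f := by
  unfold gradNorm4; positivity

lemma Q4_nonneg (h : ℝ) (f : Grid m n) : 0 ≤ Q4 h f := by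
  unfold Q4; positivity

lemma norm2_eq (h : ℝ) (f : Grid m n) :
    norm2 h f = |h| * Real.sqrt (∑ p : ZMod m × ZMod n, f p ^ 2) := by
  rw [norm2, Real.sqrt_mul (sq_nonneg h), Real.sqrt_sq_eq_abs]

lemma norm2_mono (h : ℝ) {f g : Grid m n} (hfg : ∀ p, |f p| ≤ |g p|) :
    norm2 h f ≤ norm2 h g := by
  apply Real.sqrt_le_sqrt
  refine mul_le_mul_of_nonneg_left ?_ (sq_nonneg h)
  refine Finset.sum_le_sum fun p _ => ?_
  rw [← sq_abs (f p), ← sq_abs (g p)]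
  exact pow_le_pow_left₀ (abs_nonneg _) (hfg p) 2

lemma sum_mul_le (f g : ZMod m × ZMod n → ℝ) :
    ∑ p : ZMod m × ZMod n, f p * g p
      ≤ Real.sqrt (∑ p : ZMod m × ZMod n, f p ^ 2)
        * Real.sqrt (∑ p : ZMod m × ZMod n, g p ^ 2) := by
  have h1 := Finset.sum_mul_sq_le_sq_mul_sq Finset.univ f g
  calc ∑ p : ZMod m × ZMod n, f p * g p
      ≤ |∑ p : ZMod m × ZMod n, f p * g p| := le_abs_self _
    _ = Real.sqrt ((∑ p : ZMod m × ZMod n, f p * g p) ^ 2) := (Real.sqrt_sq_eq_abs _).symm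
    _ ≤ Real.sqrt ((∑ p : ZMod m × ZMod n, f p ^ 2) * ∑ p : ZMod m × ZMod n, g p ^ 2) :=
        Real.sqrt_le_sqrt h1
    _ = _ := Real.sqrt_mul (by positivity) _

lemma norm2_add_le (h : ℝ) (f g : Grid m n) :
    norm2 h (fun p => f p + g p) ≤ norm2 h f + norm2 h g := by
  simp only [norm2_eq]
  rw [← mul_add]
  refine mul_le_mul_of_nonneg_left ?_ (abs_nonneg h)
  have e1 : ∑ p : ZMod m × ZMod n, (f p + g p) ^ 2
      = ∑ p : ZMod m × ZMod n, f p ^ 2 + 2 * ∑ p : ZMod m × ZMod n, f p * g p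
        + ∑ p : ZMod m × ZMod n, g p ^ 2 := by
    rw [Finset.mul_sum, ← Finset.sum_add_distrib, ← Finset.sum_add_distrib]
    exact Finset.sum_congr rfl fun p _ => by ring
  have hfg := sum_mul_le f g
  have ha : Real.sqrt (∑ p : ZMod m × ZMod n, f p ^ 2) ^ 2
      = ∑ p : ZMod m × ZMod n, f p ^ 2 := Real.sq_sqrt (by positivity)
  have hb : Real.sqrt (∑ p : ZMod m × ZMod n, g p ^ 2) ^ 2
      = ∑ p : ZMod m × ZMod n, g p ^ 2 := Real.sq_sqrt (by positivity)
  have key : ∑ p : ZMod m × ZMod n, (f p + g p) ^ 2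
      ≤ (Real.sqrt (∑ p : ZMod m × ZMod n, f p ^ 2)
          + Real.sqrt (∑ p : ZMod m × ZMod n, g p ^ 2)) ^ 2 := by
    rw [e1]; nlinarith [hfg, ha, hb]
  calc Real.sqrt (∑ p : ZMod m × ZMod n, (f p + g p) ^ 2)
      ≤ Real.sqrt ((Real.sqrt (∑ p : ZMod m × ZMod n, f p ^ 2)
          + Real.sqrt (∑ p : ZMod m × ZMod n, g p ^ 2)) ^ 2) := Real.sqrt_le_sqrt key
    _ = _ := by
        rw [Real.sqrt_sq (by positivity)]

lemma norm2_smul (h c : ℝ) (f : Grid m n) :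
    norm2 h (fun p => c * f p) = |c| * norm2 h f := by
  simp only [norm2_eq]
  have e1 : ∑ p : ZMod m × ZMod n, (c * f p) ^ 2
      = c ^ 2 * ∑ p : ZMod m × ZMod n, f p ^ 2 := by
    rw [Finset.mul_sum]; exact Finset.sum_congr rfl fun p _ => by ring
  rw [e1, Real.sqrt_mul (sq_nonneg c), Real.sqrt_sq_eq_abs]
  ring

lemma norm2_mul_le (h : ℝ) {M : ℝ} (hM : 0 ≤ M) {f : Grid m n} (hf : ∀ p, |f p| ≤ M)
    (g : Grid m n) : norm2 h (fun p => f p * g p) ≤ M * norm2 h g := by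
  have h1 : norm2 h (fun p => f p * g p) ≤ norm2 h (fun p => M * g p) := by
    refine norm2_mono h fun p => ?_
    rw [abs_mul, abs_mul, abs_of_nonneg hM]
    exact mul_le_mul_of_nonneg_right (hf p) (abs_nonneg _)
  refine h1.trans ?_
  rw [norm2_smul, abs_of_nonneg hM]

lemma norm2_mul_le' (h : ℝ) {M : ℝ} (hM : 0 ≤ M) {g : Grid m n} (hg : ∀ p, |g p| ≤ M)
    (f : Grid m n) : norm2 h (fun p => f p * g p) ≤ M * norm2 h f := by
  have e : (fun p : ZMod m × ZMod n => f p * g p) = fun p => g p * f p := by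
    funext p; ring
  rw [e]; exact norm2_mul_le h hM hg f

lemma norm2_mul_le_Q4 (h : ℝ) (f g : Grid m n) :
    norm2 h (fun p => f p * g p) ≤ Q4 h f * Q4 h g := by
  set Sf := h ^ 2 * ∑ p : ZMod m × ZMod n, f p ^ 4 with hSf
  set Sg := h ^ 2 * ∑ p : ZMod m × ZMod n, g p ^ 4 with hSg
  have hSf0 : 0 ≤ Sf := by rw [hSf]; positivity
  have hSg0 : 0 ≤ Sg := by rw [hSg]; positivity
  have cs : (∑ p : ZMod m × ZMod n, f p ^ 2 * g p ^ 2) ^ 2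
      ≤ (∑ p : ZMod m × ZMod n, f p ^ 4) * ∑ p : ZMod m × ZMod n, g p ^ 4 := by
    have := Finset.sum_mul_sq_le_sq_mul_sq Finset.univ (fun p => f p ^ 2) (fun p => g p ^ 2)
    calc (∑ p : ZMod m × ZMod n, f p ^ 2 * g p ^ 2) ^ 2
        ≤ (∑ p : ZMod m × ZMod n, (f p ^ 2) ^ 2) * ∑ p : ZMod m × ZMod n, (g p ^ 2) ^ 2 := this
      _ = _ := by
          congr 1 <;> exact Finset.sum_congr rfl fun p _ => by ring
  have key : h ^ 2 * ∑ p : ZMod m × ZMod n, (f p * g p) ^ 2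
      ≤ Real.sqrt Sf * Real.sqrt Sg := by
    rw [← Real.sqrt_mul hSf0]
    rw [Real.le_sqrt (by positivity) (by positivity)]
    have e1 : (h ^ 2 * ∑ p : ZMod m × ZMod n, (f p * g p) ^ 2) ^ 2
        = h ^ 4 * (∑ p : ZMod m × ZMod n, f p ^ 2 * g p ^ 2) ^ 2 := by
      rw [show ∑ p : ZMod m × ZMod n, (f p * g p) ^ 2
          = ∑ p : ZMod m × ZMod n, f p ^ 2 * g p ^ 2 from
          Finset.sum_congr rfl fun p _ => by ring]
      ring
    rw [e1, hSf, hSg]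
    calc h ^ 4 * (∑ p : ZMod m × ZMod n, f p ^ 2 * g p ^ 2) ^ 2
        ≤ h ^ 4 * ((∑ p : ZMod m × ZMod n, f p ^ 4) * ∑ p : ZMod m × ZMod n, g p ^ 4) :=
          mul_le_mul_of_nonneg_left cs (by positivity)
      _ = _ := by ring
  have q4f : Q4 h f = Real.sqrt (Real.sqrt Sf) := by
    rw [Q4, ← hSf, Real.sqrt_eq_rpow, Real.sqrt_eq_rpow, ← Real.rpow_mul hSf0]
    norm_num
  have q4g : Q4 h g = Real.sqrt (Real.sqrt Sg) := by
    rw [Q4, ← hSg, Real.sqrt_eq_rpow, Real.sqrt_eq_rpow, ← Real.rpow_mul hSg0]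
    norm_num
  rw [q4f, q4g, ← Real.sqrt_mul (Real.sqrt_nonneg _)]
  simp only [norm2]
  exact Real.sqrt_le_sqrt key

lemma shift_x (p : ZMod m × ZMod n) : p + ((1 : ZMod m), (0 : ZMod n)) = (p.1 + 1, p.2) := by
  obtain ⟨x, y⟩ := p; simp [Prod.ext_iff]

lemma shift_x' (p : ZMod m × ZMod n) : p - ((1 : ZMod m), (0 : ZMod n)) = (p.1 - 1, p.2) := by
  obtain ⟨x, y⟩ := p; simp [Prod.ext_iff]

lemma shift_y (p : ZMod m × ZMod n) : p + ((0 : ZMod m), (1 : ZMod n)) = (p.1, p.2 + 1) := by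
  obtain ⟨x, y⟩ := p; simp [Prod.ext_iff]

lemma shift_y' (p : ZMod m × ZMod n) : p - ((0 : ZMod m), (1 : ZMod n)) = (p.1, p.2 - 1) := by
  obtain ⟨x, y⟩ := p; simp [Prod.ext_iff]

lemma Dp_x_eq (h : ℝ) (f : Grid m n) : Dp h ((1 : ZMod m), (0 : ZMod n)) f = Dx h f := by
  funext p; simp only [Dp, Dx, shift_x]

lemma Dp_y_eq (h : ℝ) (f : Grid m n) : Dp h ((0 : ZMod m), (1 : ZMod n)) f = Dy h f := by
  funext p; simp only [Dp, Dy, shift_y]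

lemma Lp_x_eq (h : ℝ) (f : Grid m n) : Lp h ((1 : ZMod m), (0 : ZMod n)) f = lapHx h f := by
  funext p; simp only [Lp, lapHx, shift_x, shift_x']

lemma Lp_y_eq (h : ℝ) (f : Grid m n) : Lp h ((0 : ZMod m), (1 : ZMod n)) f = lapHy h f := by
  funext p; simp only [Lp, lapHy, shift_y, shift_y']

lemma lapH_eq_xy (h : ℝ) (f : Grid m n) :
    lapH h f = fun p => Lp h ((1 : ZMod m), (0 : ZMod n)) f p
      + Lp h ((0 : ZMod m), (1 : ZMod n)) f p := by
  funext p; simp only [lapH, Lp, shift_x, shift_x', shift_y, shift_y']; ring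

lemma lapH_eq_yx (h : ℝ) (f : Grid m n) :
    lapH h f = fun p => Lp h ((0 : ZMod m), (1 : ZMod n)) f p
      + Lp h ((1 : ZMod m), (0 : ZMod n)) f p := by
  funext p; simp only [lapH, Lp, shift_x, shift_x', shift_y, shift_y']; ring

lemma Q4_Dp_x_le (h : ℝ) (f : Grid m n) :
    Q4 h (Dp h ((1 : ZMod m), (0 : ZMod n)) f) ≤ gradNorm4 h f := by
  rw [Dp_x_eq, Q4, gradNorm4]
  refine Real.rpow_le_rpow (by positivity) ?_ (by norm_num)
  refine mul_le_mul_of_nonneg_left ?_ (sq_nonneg h)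
  exact Finset.sum_le_sum fun p _ => le_add_of_nonneg_right (by positivity)

lemma Q4_Dp_y_le (h : ℝ) (f : Grid m n) :
    Q4 h (Dp h ((0 : ZMod m), (1 : ZMod n)) f) ≤ gradNorm4 h f := by
  rw [Dp_y_eq, Q4, gradNorm4]
  refine Real.rpow_le_rpow (by positivity) ?_ (by norm_num)
  refine mul_le_mul_of_nonneg_left ?_ (sq_nonneg h)
  exact Finset.sum_le_sum fun p _ => le_add_of_nonneg_left (by positivity)

lemma Q4_Dm_eq (h : ℝ) (e : ZMod m × ZMod n) (f : Grid m n) :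
    Q4 h (Dm h e f) = Q4 h (Dp h e f) := by
  rw [Q4, Q4]
  have e1 : ∀ p : ZMod m × ZMod n, Dm h e f p = Dp h e f (p + -e) := by
    intro p; simp only [Dm, Dp, neg_add_cancel_right, sub_add_cancel, ← sub_eq_add_neg]
  have e2 : ∑ p : ZMod m × ZMod n, Dm h e f p ^ 4
      = ∑ p : ZMod m × ZMod n, Dp h e f p ^ 4 := by
    calc ∑ p : ZMod m × ZMod n, Dm h e f p ^ 4
        = ∑ p : ZMod m × ZMod n, (fun q => Dp h e f q ^ 4) (p + -e) :=
          Finset.sum_congr rfl fun p _ => by rw [e1]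
      _ = _ := sum_shift (fun q => Dp h e f q ^ 4) (-e)
  rw [e2]

lemma sbp (h : ℝ) (e : ZMod m × ZMod n) (f g : Grid m n) :
    ∑ p : ZMod m × ZMod n, Dm h e f p * g p
      = -∑ p : ZMod m × ZMod n, f p * Dp h e g p := by
  have key : ∑ p : ZMod m × ZMod n, f (p - e) * g p
      = ∑ p : ZMod m × ZMod n, f p * g (p + e) := by
    have h1 := sum_shift (fun p => f (p - e) * g p) e
    simpa [add_sub_cancel_right] using h1.symm
  have l1 : ∀ p : ZMod m × ZMod n, Dm h e f p * g p
      = (f p * g p - f (p - e) * g p) / h := fun p => by simp only [Dm]; ring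
  have l2 : ∀ p : ZMod m × ZMod n, f p * Dp h e g p
      = (f p * g (p + e) - f p * g p) / h := fun p => by simp only [Dp]; ring
  simp only [l1, l2, ← Finset.sum_div, Finset.sum_sub_distrib, key]
  ring

lemma Lp_eq_DmDp {h : ℝ} (hh : h ≠ 0) (e : ZMod m × ZMod n) (f : Grid m n) :
    Lp h e f = Dm h e (Dp h e f) := by
  funext p
  simp only [Lp, Dm, Dp, sub_add_cancel]
  field_simp
  ring

lemma Dp_Lp_comm (h : ℝ) (a b : ZMod m × ZMod n) (f : Grid m n) :
    Dp h a (Lp h b f) = Lp h b (Dp h a f) := by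
  funext p
  simp only [Dp, Lp]
  rw [show p + a + b = p + b + a from add_right_comm p a b,
    show p + a - b = p - b + a from by abel]
  ring

lemma cross_nonneg {h : ℝ} (hh : h ≠ 0) (a b : ZMod m × ZMod n) (f : Grid m n) :
    0 ≤ ∑ p : ZMod m × ZMod n, Lp h a f p * Lp h b f p := by
  have step : ∑ p : ZMod m × ZMod n, Lp h a f p * Lp h b f p
      = ∑ p : ZMod m × ZMod n, Dp h b (Dp h a f) p * Dp h b (Dp h a f) p := by
    calc ∑ p : ZMod m × ZMod n, Lp h a f p * Lp h b f p
        = ∑ p : ZMod m × ZMod n, Dm h a (Dp h a f) p * Lp h b f p := by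
          rw [Lp_eq_DmDp hh a f]
      _ = -∑ p : ZMod m × ZMod n, Dp h a f p * Dp h a (Lp h b f) p := sbp h a _ _
      _ = -∑ p : ZMod m × ZMod n, Dp h a f p * Lp h b (Dp h a f) p := by
          rw [Dp_Lp_comm]
      _ = -∑ p : ZMod m × ZMod n, Dp h a f p * Dm h b (Dp h b (Dp h a f)) p := by
          rw [← Lp_eq_DmDp hh b]
      _ = -∑ p : ZMod m × ZMod n, Dm h b (Dp h b (Dp h a f)) p * Dp h a f p := by
          congr 1; exact Finset.sum_congr rfl fun p _ => mul_comm _ _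
      _ = -(-∑ p : ZMod m × ZMod n, Dp h b (Dp h a f) p * Dp h b (Dp h a f) p) := by
          rw [sbp h b _ _]
      _ = _ := neg_neg _
  rw [step]
  exact Finset.sum_nonneg fun p _ => mul_self_nonneg _

lemma norm2_Lp_le {h : ℝ} (hh : h ≠ 0) (e e' : ZMod m × ZMod n) (f : Grid m n)
    (hsum : lapH h f = fun p => Lp h e f p + Lp h e' f p) :
    norm2 h (Lp h e f) ≤ norm2 h (lapH h f) := by
  rw [hsum]
  simp only [norm2]
  apply Real.sqrt_le_sqrt
  refine mul_le_mul_of_nonneg_left ?_ (sq_nonneg h)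
  have expand : ∑ p : ZMod m × ZMod n, (Lp h e f p + Lp h e' f p) ^ 2
      = ∑ p : ZMod m × ZMod n, Lp h e f p ^ 2
        + 2 * ∑ p : ZMod m × ZMod n, Lp h e f p * Lp h e' f p
        + ∑ p : ZMod m × ZMod n, Lp h e' f p ^ 2 := by
    rw [Finset.mul_sum, ← Finset.sum_add_distrib, ← Finset.sum_add_distrib]
    exact Finset.sum_congr rfl fun p _ => by ring
  have c := cross_nonneg hh e e' f
  have s2 : (0:ℝ) ≤ ∑ p : ZMod m × ZMod n, Lp h e' f p ^ 2 :=
    Finset.sum_nonneg fun p _ => sq_nonneg _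
  rw [expand]
  linarith

lemma Lp_add (h : ℝ) (e : ZMod m × ZMod n) (f g : Grid m n) :
    Lp h e (fun p => f p + g p) = fun p => Lp h e f p + Lp h e g p := by
  funext p; simp only [Lp]; ring

lemma Lp_smul (h c : ℝ) (e : ZMod m × ZMod n) (f : Grid m n) :
    Lp h e (fun p => c * f p) = fun p => c * Lp h e f p := by
  funext p; simp only [Lp]; ring

lemma norm2_Lp_add_le {h : ℝ} (e : ZMod m × ZMod n) (f g : Grid m n) {a b : ℝ}
    (hf : norm2 h (Lp h e f) ≤ a) (hg : norm2 h (Lp h e g) ≤ b) :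
    norm2 h (Lp h e (fun p => f p + g p)) ≤ a + b := by
  rw [Lp_add]
  exact (norm2_add_le h _ _).trans (add_le_add hf hg)

lemma prod_bound {h : ℝ} (hh : h ≠ 0) (e : ZMod m × ZMod n) (A B w : Grid m n)
    (K G NIw Gw L mA mB : ℝ)
    (hK0 : 0 ≤ K) (hA : ∀ p, |A p| ≤ K) (hB : ∀ p, |B p| ≤ K)
    (hG0 : 0 ≤ G) (hGA : Q4 h (Dp h e A) ≤ G) (hGB : Q4 h (Dp h e B) ≤ G)
    (hN0 : 0 ≤ NIw) (hN : ∀ p, |w p| ≤ NIw)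
    (hGw : Q4 h (Dp h e w) ≤ Gw)
    (hL : norm2 h (Lp h e w) ≤ L)
    (hmA : norm2 h (fun p => w p * Lp h e A p) ≤ mA)
    (hmB : norm2 h (fun p => w p * Lp h e B p) ≤ mB) :
    norm2 h (Lp h e (fun p => A p * B p * w p))
      ≤ K ^ 2 * L + K * mA + K * mB + 2 * NIw * G ^ 2 + 4 * K * (G * Gw) := by
  have hGw0 : 0 ≤ Gw := (Q4_nonneg h _).trans hGw
  have hid : Lp h e (fun p => A p * B p * w p)
      = fun p => A p * (B p * Lp h e w p)
          + (A p * (w p * Lp h e B p)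
          + (B p * (w p * Lp h e A p)
          + (w p * (Dp h e A p * Dp h e B p)
          + (w p * (Dm h e A p * Dm h e B p)
          + (A (p + e) * (Dp h e B p * Dp h e w p)
          + (B p * (Dp h e A p * Dp h e w p)
          + (A (p - e) * (Dm h e B p * Dm h e w p)
          + B p * (Dm h e A p * Dm h e w p)))))))) := by
    funext p
    simp only [Lp, Dp, Dm]
    field_simp
    ring
  have t1 : norm2 h (fun p => A p * (B p * Lp h e w p)) ≤ K * (K * L) := by
    refine (norm2_mul_le h hK0 hA _).trans (mul_le_mul_of_nonneg_left ?_ hK0)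
    exact (norm2_mul_le h hK0 hB _).trans (mul_le_mul_of_nonneg_left hL hK0)
  have t2 : norm2 h (fun p => A p * (w p * Lp h e B p)) ≤ K * mB :=
    (norm2_mul_le h hK0 hA _).trans (mul_le_mul_of_nonneg_left hmB hK0)
  have t3 : norm2 h (fun p => B p * (w p * Lp h e A p)) ≤ K * mA :=
    (norm2_mul_le h hK0 hB _).trans (mul_le_mul_of_nonneg_left hmA hK0)
  have t4 : norm2 h (fun p => w p * (Dp h e A p * Dp h e B p)) ≤ NIw * (G * G) := by
    refine (norm2_mul_le h hN0 hN _).trans (mul_le_mul_of_nonneg_left ?_ hN0)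
    exact (norm2_mul_le_Q4 h _ _).trans (mul_le_mul hGA hGB (Q4_nonneg h _) hG0)
  have t5 : norm2 h (fun p => w p * (Dm h e A p * Dm h e B p)) ≤ NIw * (G * G) := by
    refine (norm2_mul_le h hN0 hN _).trans (mul_le_mul_of_nonneg_left ?_ hN0)
    refine (norm2_mul_le_Q4 h _ _).trans ?_
    rw [Q4_Dm_eq, Q4_Dm_eq]
    exact mul_le_mul hGA hGB (Q4_nonneg h _) hG0
  have hAs : ∀ p : ZMod m × ZMod n, |A (p + e)| ≤ K := fun p => hA _
  have hAs' : ∀ p : ZMod m × ZMod n, |A (p - e)| ≤ K := fun p => hA _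
  have t6 : norm2 h (fun p => A (p + e) * (Dp h e B p * Dp h e w p)) ≤ K * (G * Gw) := by
    refine (norm2_mul_le h hK0 hAs _).trans (mul_le_mul_of_nonneg_left ?_ hK0)
    exact (norm2_mul_le_Q4 h _ _).trans (mul_le_mul hGB hGw (Q4_nonneg h _) hG0)
  have t7 : norm2 h (fun p => B p * (Dp h e A p * Dp h e w p)) ≤ K * (G * Gw) := by
    refine (norm2_mul_le h hK0 hB _).trans (mul_le_mul_of_nonneg_left ?_ hK0)
    exact (norm2_mul_le_Q4 h _ _).trans (mul_le_mul hGA hGw (Q4_nonneg h _) hG0)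
  have t8 : norm2 h (fun p => A (p - e) * (Dm h e B p * Dm h e w p)) ≤ K * (G * Gw) := by
    refine (norm2_mul_le h hK0 hAs' _).trans (mul_le_mul_of_nonneg_left ?_ hK0)
    refine (norm2_mul_le_Q4 h _ _).trans ?_
    rw [Q4_Dm_eq, Q4_Dm_eq]
    exact mul_le_mul hGB hGw (Q4_nonneg h _) hG0
  have t9 : norm2 h (fun p => B p * (Dm h e A p * Dm h e w p)) ≤ K * (G * Gw) := by
    refine (norm2_mul_le h hK0 hB _).trans (mul_le_mul_of_nonneg_left ?_ hK0)
    refine (norm2_mul_le_Q4 h _ _).trans ?_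
    rw [Q4_Dm_eq, Q4_Dm_eq]
    exact mul_le_mul hGA hGw (Q4_nonneg h _) hG0
  have tri : norm2 h (Lp h e (fun p => A p * B p * w p))
      ≤ norm2 h (fun p => A p * (B p * Lp h e w p))
        + (norm2 h (fun p => A p * (w p * Lp h e B p))
        + (norm2 h (fun p => B p * (w p * Lp h e A p))
        + (norm2 h (fun p => w p * (Dp h e A p * Dp h e B p))
        + (norm2 h (fun p => w p * (Dm h e A p * Dm h e B p))
        + (norm2 h (fun p => A (p + e) * (Dp h e B p * Dp h e w p))
        + (norm2 h (fun p => B p * (Dp h e A p * Dp h e w p))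
        + (norm2 h (fun p => A (p - e) * (Dm h e B p * Dm h e w p))
        + norm2 h (fun p => B p * (Dm h e A p * Dm h e w p))))))))) := by
    rw [hid]
    refine (norm2_add_le h _ _).trans (add_le_add_right ?_ _)
    refine (norm2_add_le h _ _).trans (add_le_add_right ?_ _)
    refine (norm2_add_le h _ _).trans (add_le_add_right ?_ _)
    refine (norm2_add_le h _ _).trans (add_le_add_right ?_ _)
    refine (norm2_add_le h _ _).trans (add_le_add_right ?_ _)
    refine (norm2_add_le h _ _).trans (add_le_add_right ?_ _)
    refine (norm2_add_le h _ _).trans (add_le_add_right ?_ _)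
    exact norm2_add_le h _ _
  refine tri.trans (le_trans (add_le_add t1 (add_le_add t2 (add_le_add t3 (add_le_add t4
    (add_le_add t5 (add_le_add t6 (add_le_add t7 (add_le_add t8 t9)))))))) (le_of_eq ?_))
  ring

lemma dir_bound {h : ℝ} (hh : h ≠ 0) (e : ZMod m × ZMod n) (Φ₁ Φ₀ φ₁ φ₀ : Grid m n)
    (K G K2e K3e NIw N2w Gw L1 L0 : ℝ)
    (hK0 : 0 ≤ K) (hG0 : 0 ≤ G) (hK2e0 : 0 ≤ K2e) (hK3e0 : 0 ≤ K3e)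
    (hNIw0 : 0 ≤ NIw) (hN2w0 : 0 ≤ N2w)
    (hL10 : 0 ≤ L1) (hL00 : 0 ≤ L0)
    (hA1 : ∀ p, |Φ₁ p| ≤ K) (hA0 : ∀ p, |Φ₀ p| ≤ K)
    (ha1 : ∀ p, |φ₁ p| ≤ K) (ha0 : ∀ p, |φ₀ p| ≤ K)
    (hG1 : Q4 h (Dp h e Φ₁) ≤ G) (hG0' : Q4 h (Dp h e Φ₀) ≤ G)
    (hg1 : Q4 h (Dp h e φ₁) ≤ G) (hg0 : Q4 h (Dp h e φ₀) ≤ G)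
    (hw1G : Q4 h (Dp h e (fun p => Φ₁ p - φ₁ p)) ≤ Gw)
    (hw0G : Q4 h (Dp h e (fun p => Φ₀ p - φ₀ p)) ≤ Gw)
    (hw1N : ∀ p, |Φ₁ p - φ₁ p| ≤ NIw) (hw0N : ∀ p, |Φ₀ p - φ₀ p| ≤ NIw)
    (hw1L : norm2 h (Lp h e (fun p => Φ₁ p - φ₁ p)) ≤ L1)
    (hw0L : norm2 h (Lp h e (fun p => Φ₀ p - φ₀ p)) ≤ L0)
    (hw12 : norm2 h (fun p => Φ₁ p - φ₁ p) ≤ N2w)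
    (hw02 : norm2 h (fun p => Φ₀ p - φ₀ p) ≤ N2w)
    (hK21 : ∀ p, |Lp h e Φ₁ p| ≤ K2e) (hK20 : ∀ p, |Lp h e Φ₀ p| ≤ K2e)
    (hK31 : norm2 h (Lp h e φ₁) ≤ K3e) (hK30 : norm2 h (Lp h e φ₀) ≤ K3e) :
    norm2 h (Lp h e (fun p => chi (Φ₁ p) (Φ₀ p) - chi (φ₁ p) (φ₀ p)))
      ≤ 3 * (K ^ 2 * (L1 + L0) + 2 * K * (NIw * K3e) + 2 * K * (K2e * N2w)
          + 2 * NIw * G ^ 2 + 4 * K * (G * Gw)) := by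
  set E := K ^ 2 * (L1 + L0) + 2 * K * (NIw * K3e) + 2 * K * (K2e * N2w)
      + 2 * NIw * G ^ 2 + 4 * K * (G * Gw) with hE
  have nn1 : 0 ≤ K ^ 2 * L1 := mul_nonneg (pow_nonneg hK0 2) hL10
  have nn2 : 0 ≤ K ^ 2 * L0 := mul_nonneg (pow_nonneg hK0 2) hL00
  have nn3 : 0 ≤ K * (NIw * K3e) := mul_nonneg hK0 (mul_nonneg hNIw0 hK3e0)
  have nn4 : 0 ≤ K * (K2e * N2w) := mul_nonneg hK0 (mul_nonneg hK2e0 hN2w0)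
  have mP11 : norm2 h (fun p => (Φ₁ p - φ₁ p) * Lp h e Φ₁ p) ≤ K2e * N2w :=
    (norm2_mul_le' h hK2e0 hK21 _).trans (mul_le_mul_of_nonneg_left hw12 hK2e0)
  have mP01 : norm2 h (fun p => (Φ₁ p - φ₁ p) * Lp h e Φ₀ p) ≤ K2e * N2w :=
    (norm2_mul_le' h hK2e0 hK20 _).trans (mul_le_mul_of_nonneg_left hw12 hK2e0)
  have mP00 : norm2 h (fun p => (Φ₀ p - φ₀ p) * Lp h e Φ₀ p) ≤ K2e * N2w :=
    (norm2_mul_le' h hK2e0 hK20 _).trans (mul_le_mul_of_nonneg_left hw02 hK2e0)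
  have mq11 : norm2 h (fun p => (Φ₁ p - φ₁ p) * Lp h e φ₁ p) ≤ NIw * K3e :=
    (norm2_mul_le h hNIw0 hw1N _).trans (mul_le_mul_of_nonneg_left hK31 hNIw0)
  have mq10 : norm2 h (fun p => (Φ₀ p - φ₀ p) * Lp h e φ₁ p) ≤ NIw * K3e :=
    (norm2_mul_le h hNIw0 hw0N _).trans (mul_le_mul_of_nonneg_left hK31 hNIw0)
  have mq00 : norm2 h (fun p => (Φ₀ p - φ₀ p) * Lp h e φ₀ p) ≤ NIw * K3e :=
    (norm2_mul_le h hNIw0 hw0N _).trans (mul_le_mul_of_nonneg_left hK30 hNIw0)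
  have E1 : norm2 h (Lp h e (fun p => Φ₁ p * Φ₁ p * (Φ₁ p - φ₁ p))) ≤ E := by
    have b := prod_bound hh e Φ₁ Φ₁ (fun p => Φ₁ p - φ₁ p) K G NIw Gw L1
      (K2e * N2w) (K2e * N2w) hK0 hA1 hA1 hG0 hG1 hG1 hNIw0 hw1N hw1G hw1L mP11 mP11
    rw [hE]; linarith
  have E2 : norm2 h (Lp h e (fun p => φ₁ p * Φ₁ p * (Φ₁ p - φ₁ p))) ≤ E := by
    have b := prod_bound hh e φ₁ Φ₁ (fun p => Φ₁ p - φ₁ p) K G NIw Gw L1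
      (NIw * K3e) (K2e * N2w) hK0 ha1 hA1 hG0 hg1 hG1 hNIw0 hw1N hw1G hw1L mq11 mP11
    rw [hE]; linarith
  have E3 : norm2 h (Lp h e (fun p => φ₁ p * φ₁ p * (Φ₁ p - φ₁ p))) ≤ E := by
    have b := prod_bound hh e φ₁ φ₁ (fun p => Φ₁ p - φ₁ p) K G NIw Gw L1
      (NIw * K3e) (NIw * K3e) hK0 ha1 ha1 hG0 hg1 hg1 hNIw0 hw1N hw1G hw1L mq11 mq11
    rw [hE]; linarith
  have E4 : norm2 h (Lp h e (fun p => Φ₁ p * Φ₀ p * (Φ₁ p - φ₁ p))) ≤ E := by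
    have b := prod_bound hh e Φ₁ Φ₀ (fun p => Φ₁ p - φ₁ p) K G NIw Gw L1
      (K2e * N2w) (K2e * N2w) hK0 hA1 hA0 hG0 hG1 hG0' hNIw0 hw1N hw1G hw1L mP11 mP01
    rw [hE]; linarith
  have E5 : norm2 h (Lp h e (fun p => φ₁ p * Φ₀ p * (Φ₁ p - φ₁ p))) ≤ E := by
    have b := prod_bound hh e φ₁ Φ₀ (fun p => Φ₁ p - φ₁ p) K G NIw Gw L1
      (NIw * K3e) (K2e * N2w) hK0 ha1 hA0 hG0 hg1 hG0' hNIw0 hw1N hw1G hw1L mq11 mP01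
    rw [hE]; linarith
  have E6 : norm2 h (Lp h e (fun p => φ₁ p * φ₁ p * (Φ₀ p - φ₀ p))) ≤ E := by
    have b := prod_bound hh e φ₁ φ₁ (fun p => Φ₀ p - φ₀ p) K G NIw Gw L0
      (NIw * K3e) (NIw * K3e) hK0 ha1 ha1 hG0 hg1 hg1 hNIw0 hw0N hw0G hw0L mq10 mq10
    rw [hE]; linarith
  have E7 : norm2 h (Lp h e (fun p => Φ₀ p * Φ₀ p * (Φ₁ p - φ₁ p))) ≤ E := by
    have b := prod_bound hh e Φ₀ Φ₀ (fun p => Φ₁ p - φ₁ p) K G NIw Gw L1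
      (K2e * N2w) (K2e * N2w) hK0 hA0 hA0 hG0 hG0' hG0' hNIw0 hw1N hw1G hw1L mP01 mP01
    rw [hE]; linarith
  have E8 : norm2 h (Lp h e (fun p => φ₁ p * Φ₀ p * (Φ₀ p - φ₀ p))) ≤ E := by
    have b := prod_bound hh e φ₁ Φ₀ (fun p => Φ₀ p - φ₀ p) K G NIw Gw L0
      (NIw * K3e) (K2e * N2w) hK0 ha1 hA0 hG0 hg1 hG0' hNIw0 hw0N hw0G hw0L mq10 mP00
    rw [hE]; linarith
  have E9 : norm2 h (Lp h e (fun p => φ₁ p * φ₀ p * (Φ₀ p - φ₀ p))) ≤ E := by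
    have b := prod_bound hh e φ₁ φ₀ (fun p => Φ₀ p - φ₀ p) K G NIw Gw L0
      (NIw * K3e) (NIw * K3e) hK0 ha1 ha0 hG0 hg1 hg0 hNIw0 hw0N hw0G hw0L mq10 mq00
    rw [hE]; linarith
  have E10 : norm2 h (Lp h e (fun p => Φ₀ p * Φ₀ p * (Φ₀ p - φ₀ p))) ≤ E := by
    have b := prod_bound hh e Φ₀ Φ₀ (fun p => Φ₀ p - φ₀ p) K G NIw Gw L0
      (K2e * N2w) (K2e * N2w) hK0 hA0 hA0 hG0 hG0' hG0' hNIw0 hw0N hw0G hw0L mP00 mP00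
    rw [hE]; linarith
  have E11 : norm2 h (Lp h e (fun p => φ₀ p * Φ₀ p * (Φ₀ p - φ₀ p))) ≤ E := by
    have b := prod_bound hh e φ₀ Φ₀ (fun p => Φ₀ p - φ₀ p) K G NIw Gw L0
      (NIw * K3e) (K2e * N2w) hK0 ha0 hA0 hG0 hg0 hG0' hNIw0 hw0N hw0G hw0L mq00 mP00
    rw [hE]; linarith
  have E12 : norm2 h (Lp h e (fun p => φ₀ p * φ₀ p * (Φ₀ p - φ₀ p))) ≤ E := by
    have b := prod_bound hh e φ₀ φ₀ (fun p => Φ₀ p - φ₀ p) K G NIw Gw L0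
      (NIw * K3e) (NIw * K3e) hK0 ha0 ha0 hG0 hg0 hg0 hNIw0 hw0N hw0G hw0L mq00 mq00
    rw [hE]; linarith
  have hψ : (fun p : ZMod m × ZMod n => chi (Φ₁ p) (Φ₀ p) - chi (φ₁ p) (φ₀ p))
      = fun p => (1 / 4 : ℝ) *
          (Φ₁ p * Φ₁ p * (Φ₁ p - φ₁ p)
          + (φ₁ p * Φ₁ p * (Φ₁ p - φ₁ p)
          + (φ₁ p * φ₁ p * (Φ₁ p - φ₁ p)
          + (Φ₁ p * Φ₀ p * (Φ₁ p - φ₁ p)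
          + (φ₁ p * Φ₀ p * (Φ₁ p - φ₁ p)
          + (φ₁ p * φ₁ p * (Φ₀ p - φ₀ p)
          + (Φ₀ p * Φ₀ p * (Φ₁ p - φ₁ p)
          + (φ₁ p * Φ₀ p * (Φ₀ p - φ₀ p)
          + (φ₁ p * φ₀ p * (Φ₀ p - φ₀ p)
          + (Φ₀ p * Φ₀ p * (Φ₀ p - φ₀ p)
          + (φ₀ p * Φ₀ p * (Φ₀ p - φ₀ p)
          + φ₀ p * φ₀ p * (Φ₀ p - φ₀ p)))))))))))) := by
    funext p; simp only [chi]; ring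
  rw [hψ, Lp_smul, norm2_smul, show |(1 / 4 : ℝ)| = 1 / 4 by norm_num]
  have T : norm2 h (Lp h e
      (fun p => Φ₁ p * Φ₁ p * (Φ₁ p - φ₁ p)
          + (φ₁ p * Φ₁ p * (Φ₁ p - φ₁ p)
          + (φ₁ p * φ₁ p * (Φ₁ p - φ₁ p)
          + (Φ₁ p * Φ₀ p * (Φ₁ p - φ₁ p)
          + (φ₁ p * Φ₀ p * (Φ₁ p - φ₁ p)
          + (φ₁ p * φ₁ p * (Φ₀ p - φ₀ p)
          + (Φ₀ p * Φ₀ p * (Φ₁ p - φ₁ p)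
          + (φ₁ p * Φ₀ p * (Φ₀ p - φ₀ p)
          + (φ₁ p * φ₀ p * (Φ₀ p - φ₀ p)
          + (Φ₀ p * Φ₀ p * (Φ₀ p - φ₀ p)
          + (φ₀ p * Φ₀ p * (Φ₀ p - φ₀ p)
          + φ₀ p * φ₀ p * (Φ₀ p - φ₀ p)))))))))))))
      ≤ E + (E + (E + (E + (E + (E + (E + (E + (E + (E + (E + E)))))))))) := by
    refine norm2_Lp_add_le e _ _ E1 ?_
    refine norm2_Lp_add_le e _ _ E2 ?_
    refine norm2_Lp_add_le e _ _ E3 ?_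
    refine norm2_Lp_add_le e _ _ E4 ?_
    refine norm2_Lp_add_le e _ _ E5 ?_
    refine norm2_Lp_add_le e _ _ E6 ?_
    refine norm2_Lp_add_le e _ _ E7 ?_
    refine norm2_Lp_add_le e _ _ E8 ?_
    refine norm2_Lp_add_le e _ _ E9 ?_
    refine norm2_Lp_add_le e _ _ E10 ?_
    exact norm2_Lp_add_le e _ _ E11 E12
  linarith

end NLErr


set_option maxHeartbeats 2000000 in
open NLErr in
/-- Control of the nonlinear error term: a bound on
`‖Δₕ(χ(Φ^{k+1}, Φ^k) − χ(φ^{k+1}, φ^k))‖₂` in terms of the differences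
`φ̃^{k+1} = Φ^{k+1} − φ^{k+1}`, `φ̃^k = Φ^k − φ^k`, with a constant `C₁₈` independent of
`h`, `m`, `n` and of the grid functions. -/
theorem control_nonlinear_error :
    ∃ C₁₈ > (0 : ℝ), ∀ (m n : ℕ) [NeZero m] [NeZero n] (h : ℝ), 0 < h →
      ∀ Φ₁ Φ₀ φ₁ φ₀ : Grid m n,
        norm2 h (lapH h (fun p => chi (Φ₁ p) (Φ₀ p) - chi (φ₁ p) (φ₀ p)))
          ≤ C₁₈ *
            ((normInf Φ₁ + normInf Φ₀ + normInf φ₁ + normInf φ₀) ^ 2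
                * (norm2 h (lapH h (fun p => Φ₁ p - φ₁ p))
                  + norm2 h (lapH h (fun p => Φ₀ p - φ₀ p)))
              + (normInf Φ₁ + normInf Φ₀ + normInf φ₁ + normInf φ₀)
                  * (gradNorm4 h Φ₁ + gradNorm4 h Φ₀ + gradNorm4 h φ₁ + gradNorm4 h φ₀)
                  * (gradNorm4 h (fun p => Φ₁ p - φ₁ p)
                    + gradNorm4 h (fun p => Φ₀ p - φ₀ p))
              + ((normInf Φ₁ + normInf Φ₀ + normInf φ₁ + normInf φ₀)
                    * (norm2 h (lapHx h φ₁) + norm2 h (lapHx h φ₀)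
                      + norm2 h (lapHy h φ₁) + norm2 h (lapHy h φ₀))
                  + (gradNorm4 h Φ₁ + gradNorm4 h Φ₀ + gradNorm4 h φ₁
                      + gradNorm4 h φ₀) ^ 2)
                * (normInf (fun p => Φ₁ p - φ₁ p) + normInf (fun p => Φ₀ p - φ₀ p))
              + ((gradNormInf h Φ₁ + gradNormInf h Φ₀) ^ 2
                  + (normInf Φ₁ + normInf Φ₀ + normInf φ₁ + normInf φ₀)
                    * (normInf (lapHx h Φ₁) + normInf (lapHx h Φ₀)
                      + normInf (lapHy h Φ₁) + normInf (lapHy h Φ₀)))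
                * (norm2 h (fun p => Φ₁ p - φ₁ p)
                  + norm2 h (fun p => Φ₀ p - φ₀ p))) := by
  refine ⟨100, by norm_num, ?_⟩
  intro m n _ _ h hh Φ₁ Φ₀ φ₁ φ₀
  have hne : h ≠ 0 := ne_of_gt hh
  set ex : ZMod m × ZMod n := ((1 : ZMod m), (0 : ZMod n)) with hex
  set ey : ZMod m × ZMod n := ((0 : ZMod m), (1 : ZMod n)) with hey
  set K := normInf Φ₁ + normInf Φ₀ + normInf φ₁ + normInf φ₀ with hK
  set G := gradNorm4 h Φ₁ + gradNorm4 h Φ₀ + gradNorm4 h φ₁ + gradNorm4 h φ₀ with hGdef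
  set K2 := normInf (lapHx h Φ₁) + normInf (lapHx h Φ₀)
      + normInf (lapHy h Φ₁) + normInf (lapHy h Φ₀) with hK2def
  set K3 := norm2 h (lapHx h φ₁) + norm2 h (lapHx h φ₀)
      + norm2 h (lapHy h φ₁) + norm2 h (lapHy h φ₀) with hK3def
  set NIw := normInf (fun p => Φ₁ p - φ₁ p) + normInf (fun p => Φ₀ p - φ₀ p) with hNIwdef
  set N2w := norm2 h (fun p => Φ₁ p - φ₁ p) + norm2 h (fun p => Φ₀ p - φ₀ p) with hN2wdef
  set Gw := gradNorm4 h (fun p => Φ₁ p - φ₁ p) + gradNorm4 h (fun p => Φ₀ p - φ₀ p)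
      with hGwdef
  set L1 := norm2 h (lapH h (fun p => Φ₁ p - φ₁ p)) with hL1def
  set L0 := norm2 h (lapH h (fun p => Φ₀ p - φ₀ p)) with hL0def
  set K5 := gradNormInf h Φ₁ + gradNormInf h Φ₀ with hK5def
  have nI1 := normInf_nonneg Φ₁
  have nI0 := normInf_nonneg Φ₀
  have ni1 := normInf_nonneg φ₁
  have ni0 := normInf_nonneg φ₀
  have hK0 : 0 ≤ K := by rw [hK]; linarith
  have g41 := gradNorm4_nonneg h Φ₁
  have g40 := gradNorm4_nonneg h Φ₀
  have g41' := gradNorm4_nonneg h φ₁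
  have g40' := gradNorm4_nonneg h φ₀
  have hG0 : 0 ≤ G := by rw [hGdef]; linarith
  have k2a := normInf_nonneg (lapHx h Φ₁)
  have k2b := normInf_nonneg (lapHx h Φ₀)
  have k2c := normInf_nonneg (lapHy h Φ₁)
  have k2d := normInf_nonneg (lapHy h Φ₀)
  have hK20 : 0 ≤ K2 := by rw [hK2def]; linarith
  have k3a := norm2_nonneg h (lapHx h φ₁)
  have k3b := norm2_nonneg h (lapHx h φ₀)
  have k3c := norm2_nonneg h (lapHy h φ₁)
  have k3d := norm2_nonneg h (lapHy h φ₀)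
  have hK30 : 0 ≤ K3 := by rw [hK3def]; linarith
  have niw1 := normInf_nonneg (fun p => Φ₁ p - φ₁ p)
  have niw0 := normInf_nonneg (fun p => Φ₀ p - φ₀ p)
  have hNIw0 : 0 ≤ NIw := by rw [hNIwdef]; linarith
  have n2w1 := norm2_nonneg h (fun p => Φ₁ p - φ₁ p)
  have n2w0 := norm2_nonneg h (fun p => Φ₀ p - φ₀ p)
  have hN2w0 : 0 ≤ N2w := by rw [hN2wdef]; linarith
  have gw1 := gradNorm4_nonneg h (fun p => Φ₁ p - φ₁ p)
  have gw0 := gradNorm4_nonneg h (fun p => Φ₀ p - φ₀ p)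
  have hGw0 : 0 ≤ Gw := by rw [hGwdef]; linarith
  have hL10 : 0 ≤ L1 := norm2_nonneg _ _
  have hL00 : 0 ≤ L0 := norm2_nonneg _ _
  -- pointwise sup bounds
  have hA1 : ∀ p, |Φ₁ p| ≤ K := fun p => (abs_le_normInf Φ₁ p).trans (by rw [hK]; linarith)
  have hA0 : ∀ p, |Φ₀ p| ≤ K := fun p => (abs_le_normInf Φ₀ p).trans (by rw [hK]; linarith)
  have ha1 : ∀ p, |φ₁ p| ≤ K := fun p => (abs_le_normInf φ₁ p).trans (by rw [hK]; linarith)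
  have ha0 : ∀ p, |φ₀ p| ≤ K := fun p => (abs_le_normInf φ₀ p).trans (by rw [hK]; linarith)
  have hw1N : ∀ p, |Φ₁ p - φ₁ p| ≤ NIw := fun p =>
    (abs_le_normInf (fun q => Φ₁ q - φ₁ q) p).trans (by rw [hNIwdef]; linarith)
  have hw0N : ∀ p, |Φ₀ p - φ₀ p| ≤ NIw := fun p =>
    (abs_le_normInf (fun q => Φ₀ q - φ₀ q) p).trans (by rw [hNIwdef]; linarith)
  -- norm2 bounds for the differences
  have hw12 : norm2 h (fun p => Φ₁ p - φ₁ p) ≤ N2w := by rw [hN2wdef]; linarith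
  have hw02 : norm2 h (fun p => Φ₀ p - φ₀ p) ≤ N2w := by rw [hN2wdef]; linarith
  -- x-direction hypotheses
  have hG1x : Q4 h (Dp h ex Φ₁) ≤ G := (Q4_Dp_x_le h Φ₁).trans (by rw [hGdef]; linarith)
  have hG0x : Q4 h (Dp h ex Φ₀) ≤ G := (Q4_Dp_x_le h Φ₀).trans (by rw [hGdef]; linarith)
  have hg1x : Q4 h (Dp h ex φ₁) ≤ G := (Q4_Dp_x_le h φ₁).trans (by rw [hGdef]; linarith)
  have hg0x : Q4 h (Dp h ex φ₀) ≤ G := (Q4_Dp_x_le h φ₀).trans (by rw [hGdef]; linarith)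
  have hw1Gx : Q4 h (Dp h ex (fun p => Φ₁ p - φ₁ p)) ≤ Gw :=
    (Q4_Dp_x_le h _).trans (by rw [hGwdef]; linarith)
  have hw0Gx : Q4 h (Dp h ex (fun p => Φ₀ p - φ₀ p)) ≤ Gw :=
    (Q4_Dp_x_le h _).trans (by rw [hGwdef]; linarith)
  have hw1Lx : norm2 h (Lp h ex (fun p => Φ₁ p - φ₁ p)) ≤ L1 :=
    norm2_Lp_le hne ex ey _ (lapH_eq_xy h _)
  have hw0Lx : norm2 h (Lp h ex (fun p => Φ₀ p - φ₀ p)) ≤ L0 :=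
    norm2_Lp_le hne ex ey _ (lapH_eq_xy h _)
  have hK21x : ∀ p, |Lp h ex Φ₁ p| ≤ K2 := by
    intro p; rw [hex, Lp_x_eq]
    exact (abs_le_normInf _ p).trans (by rw [hK2def]; linarith)
  have hK20x : ∀ p, |Lp h ex Φ₀ p| ≤ K2 := by
    intro p; rw [hex, Lp_x_eq]
    exact (abs_le_normInf _ p).trans (by rw [hK2def]; linarith)
  have hK31x : norm2 h (Lp h ex φ₁) ≤ K3 := by
    rw [hex, Lp_x_eq]; rw [hK3def]; linarith
  have hK30x : norm2 h (Lp h ex φ₀) ≤ K3 := by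
    rw [hex, Lp_x_eq]; rw [hK3def]; linarith
  -- y-direction hypotheses
  have hG1y : Q4 h (Dp h ey Φ₁) ≤ G := (Q4_Dp_y_le h Φ₁).trans (by rw [hGdef]; linarith)
  have hG0y : Q4 h (Dp h ey Φ₀) ≤ G := (Q4_Dp_y_le h Φ₀).trans (by rw [hGdef]; linarith)
  have hg1y : Q4 h (Dp h ey φ₁) ≤ G := (Q4_Dp_y_le h φ₁).trans (by rw [hGdef]; linarith)
  have hg0y : Q4 h (Dp h ey φ₀) ≤ G := (Q4_Dp_y_le h φ₀).trans (by rw [hGdef]; linarith)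
  have hw1Gy : Q4 h (Dp h ey (fun p => Φ₁ p - φ₁ p)) ≤ Gw :=
    (Q4_Dp_y_le h _).trans (by rw [hGwdef]; linarith)
  have hw0Gy : Q4 h (Dp h ey (fun p => Φ₀ p - φ₀ p)) ≤ Gw :=
    (Q4_Dp_y_le h _).trans (by rw [hGwdef]; linarith)
  have hw1Ly : norm2 h (Lp h ey (fun p => Φ₁ p - φ₁ p)) ≤ L1 :=
    norm2_Lp_le hne ey ex _ (lapH_eq_yx h _)
  have hw0Ly : norm2 h (Lp h ey (fun p => Φ₀ p - φ₀ p)) ≤ L0 :=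
    norm2_Lp_le hne ey ex _ (lapH_eq_yx h _)
  have hK21y : ∀ p, |Lp h ey Φ₁ p| ≤ K2 := by
    intro p; rw [hey, Lp_y_eq]
    exact (abs_le_normInf _ p).trans (by rw [hK2def]; linarith)
  have hK20y : ∀ p, |Lp h ey Φ₀ p| ≤ K2 := by
    intro p; rw [hey, Lp_y_eq]
    exact (abs_le_normInf _ p).trans (by rw [hK2def]; linarith)
  have hK31y : norm2 h (Lp h ey φ₁) ≤ K3 := by
    rw [hey, Lp_y_eq]; rw [hK3def]; linarith
  have hK30y : norm2 h (Lp h ey φ₀) ≤ K3 := by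
    rw [hey, Lp_y_eq]; rw [hK3def]; linarith
  have Hx := dir_bound hne ex Φ₁ Φ₀ φ₁ φ₀ K G K2 K3 NIw N2w Gw L1 L0
    hK0 hG0 hK20 hK30 hNIw0 hN2w0 hL10 hL00
    hA1 hA0 ha1 ha0 hG1x hG0x hg1x hg0x hw1Gx hw0Gx hw1N hw0N hw1Lx hw0Lx
    hw12 hw02 hK21x hK20x hK31x hK30x
  have Hy := dir_bound hne ey Φ₁ Φ₀ φ₁ φ₀ K G K2 K3 NIw N2w Gw L1 L0
    hK0 hG0 hK20 hK30 hNIw0 hN2w0 hL10 hL00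
    hA1 hA0 ha1 ha0 hG1y hG0y hg1y hg0y hw1Gy hw0Gy hw1N hw0N hw1Ly hw0Ly
    hw12 hw02 hK21y hK20y hK31y hK30y
  have hsplit := lapH_eq_xy h (fun p => chi (Φ₁ p) (Φ₀ p) - chi (φ₁ p) (φ₀ p))
  have tri : norm2 h (lapH h (fun p => chi (Φ₁ p) (Φ₀ p) - chi (φ₁ p) (φ₀ p)))
      ≤ norm2 h (Lp h ex (fun p => chi (Φ₁ p) (Φ₀ p) - chi (φ₁ p) (φ₀ p)))
        + norm2 h (Lp h ey (fun p => chi (Φ₁ p) (Φ₀ p) - chi (φ₁ p) (φ₀ p))) := by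
    rw [hsplit]; exact norm2_add_le h _ _
  have pr1 : 0 ≤ K ^ 2 * L1 := mul_nonneg (pow_nonneg hK0 2) hL10
  have pr2 : 0 ≤ K ^ 2 * L0 := mul_nonneg (pow_nonneg hK0 2) hL00
  have pr3 : 0 ≤ K * G * Gw := mul_nonneg (mul_nonneg hK0 hG0) hGw0
  have pr4 : 0 ≤ K * K3 * NIw := mul_nonneg (mul_nonneg hK0 hK30) hNIw0
  have pr5 : 0 ≤ G ^ 2 * NIw := mul_nonneg (sq_nonneg G) hNIw0
  have pr6 : 0 ≤ K * K2 * N2w := mul_nonneg (mul_nonneg hK0 hK20) hN2w0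
  have pr7 : 0 ≤ K5 ^ 2 * N2w := mul_nonneg (sq_nonneg K5) hN2w0
  linarith [Hx, Hy, tri, pr1, pr2, pr3, pr4, pr5, pr6, pr7]
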